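/- Let $w \in \mathbb{C}$, let $\Omega, \Omega' \subseteq \mathbb{C}$ be bounded domains both containing $w$, and let $g$ (resp. $g'$) be a Green's function of $\Omega$ (resp. $\Omega'$) with pole at $w$, extended by zero. If $\sup_{z \in \mathbb{C} \setminus \{w\}} (g'(z) - g(z)) > 0$, then this supremum is attained at a point of $\partial\Omega$; in particular $\sup_{z \in \mathbb{C} \setminus \{w\}} (g'(z) - g(z)) = \sup_{z \in \partial\Omega} g'(z)$ (note $g = 0$ on $\partial\Omega$). -/

import Mathlib

open Filter Topology

/-- A function is harmonic on a set `s ⊆ ℂ` if it is `C²` there and its Laplacian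
(the sum of the second directional derivatives in the directions `1` and `I`) vanishes. -/
def HarmonicOnSet (f : ℂ → ℝ) (s : Set ℂ) : Prop :=
  ContDiffOn ℝ 2 f s ∧
  ∀ z ∈ s,
    fderiv ℝ (fun y => fderiv ℝ f y 1) z 1 +
      fderiv ℝ (fun y => fderiv ℝ f y Complex.I) z Complex.I = 0

/-- `g : ℂ → ℝ` is a Green's function of `Ω` with pole at `w`, extended by zero. -/
def IsGreensFunction (Ω : Set ℂ) (w : ℂ) (g : ℂ → ℝ) : Prop :=
  ContinuousOn g {w}ᶜ ∧
  (∀ z, z ∉ Ω → g z = 0) ∧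
  HarmonicOnSet g (Ω \ {w}) ∧
  ∃ C : ℝ, ∃ r > (0 : ℝ), ∀ z ∈ Metric.ball w r \ {w},
    |g z + Real.log ‖z - w‖| ≤ C

lemma dirDiff {f : ℂ → ℝ} {U : Set ℂ} (hU : IsOpen U) (hf : ContDiffOn ℝ 2 f U) (v : ℂ)
    {x : ℂ} (hx : x ∈ U) : DifferentiableAt ℝ (fun y => fderiv ℝ f y v) x := by
  have h1 : ContDiffOn ℝ 1 (fun y => fderiv ℝ f y) U := hf.fderiv_of_isOpen hU (by norm_num)
  have h2 : DifferentiableAt ℝ (fun y => fderiv ℝ f y) x :=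
    (h1.differentiableOn (by norm_num)).differentiableAt (hU.mem_nhds hx)
  exact h2.clm_apply (differentiableAt_const v)

lemma diffAt_of_C2 {f : ℂ → ℝ} {U : Set ℂ} (hU : IsOpen U) (hf : ContDiffOn ℝ 2 f U)
    {x : ℂ} (hx : x ∈ U) : DifferentiableAt ℝ f x :=
  (hf.differentiableOn (by norm_num)).differentiableAt (hU.mem_nhds hx)

lemma dir2_nonpos {f : ℂ → ℝ} {U : Set ℂ} (hU : IsOpen U) (hf : ContDiffOn ℝ 2 f U)
    {x₀ : ℂ} (hx : x₀ ∈ U) (hmax : IsLocalMax f x₀) (v : ℂ) :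
    fderiv ℝ (fun y => fderiv ℝ f y v) x₀ v ≤ 0 := by
  by_contra hcon
  push_neg at hcon
  set ℓ : ℝ → ℂ := fun t => x₀ + t • v with hℓdef
  have hℓder : ∀ t : ℝ, HasDerivAt ℓ v t := by
    intro t
    simpa [hℓdef] using ((hasDerivAt_id t).smul_const v).const_add x₀
  have hℓ0 : ℓ 0 = x₀ := by simp [hℓdef]
  have hℓcont : Continuous ℓ :=
    continuous_const.add (continuous_id.smul continuous_const)
  have hten : Tendsto ℓ (𝓝 0) (𝓝 x₀) := by
    rw [← hℓ0]; exact hℓcont.continuousAt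
  have hUev : ∀ᶠ t in 𝓝 (0:ℝ), ℓ t ∈ U := hten (hU.mem_nhds hx)
  set ψ : ℝ → ℝ := fun t => fderiv ℝ f (ℓ t) v with hψdef
  have hφder : ∀ᶠ t in 𝓝 (0:ℝ), HasDerivAt (fun s => f (ℓ s)) (ψ t) t := by
    filter_upwards [hUev] with t ht
    exact (diffAt_of_C2 hU hf ht).hasFDerivAt.comp_hasDerivAt t (hℓder t)
  have hψ0der : HasDerivAt ψ (fderiv ℝ (fun y => fderiv ℝ f y v) x₀ v) 0 := by
    have hdiff : DifferentiableAt ℝ (fun y => fderiv ℝ f y v) (ℓ 0) := by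
      rw [hℓ0]; exact dirDiff hU hf v hx
    have h0 := hdiff.hasFDerivAt.comp_hasDerivAt 0 (hℓder 0)
    rw [hℓ0] at h0
    exact h0
  have hφmax : IsLocalMax (fun s => f (ℓ s)) 0 := by
    have hmax' : IsMaxFilter f (𝓝 x₀) (ℓ 0) := by rw [hℓ0]; exact hmax
    exact hmax'.comp_tendsto hten
  have hψzero : ψ 0 = 0 := by
    have hd0 : HasDerivAt (fun s => f (ℓ s)) (ψ 0) 0 := hφder.self_of_nhds
    have h := hφmax.deriv_eq_zero
    rwa [hd0.deriv] at h
  -- eventually ψ positive on the right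
  have hslope : Tendsto (slope ψ 0) (𝓝[≠] 0) (𝓝 (fderiv ℝ (fun y => fderiv ℝ f y v) x₀ v)) :=
    hasDerivAt_iff_tendsto_slope.mp hψ0der
  have hslopepos : ∀ᶠ t in 𝓝[≠] (0:ℝ), 0 < slope ψ 0 t :=
    hslope.eventually (eventually_gt_nhds hcon)
  have hpos' : ∀ᶠ t in 𝓝[>] (0:ℝ), 0 < ψ t := by
    have hmono : 𝓝[>] (0:ℝ) ≤ 𝓝[≠] (0:ℝ) :=
      nhdsWithin_mono _ (fun t ht => ne_of_gt ht)
    filter_upwards [hslopepos.filter_mono hmono, self_mem_nhdsWithin] with t hts ht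
    have : slope ψ 0 t = ψ t / t := by simp [slope, hψzero, div_eq_inv_mul]
    rw [this] at hts
    have := mul_pos hts (show (0:ℝ) < t from ht)
    rwa [div_mul_cancel₀ _ (ne_of_gt ht)] at this
  obtain ⟨δ₂, hδ₂pos, hδ₂⟩ : ∃ δ > 0, ∀ t ∈ Set.Ioo (0:ℝ) δ, 0 < ψ t := by
    rcases mem_nhdsGT_iff_exists_Ioo_subset.mp hpos' with ⟨u, hu, hsub⟩
    exact ⟨u, hu, fun t ht => hsub ht⟩
  have hev : ∀ᶠ t in 𝓝 (0:ℝ),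
      (HasDerivAt (fun s => f (ℓ s)) (ψ t) t ∧ f (ℓ t) ≤ f (ℓ 0)) := by
    have h2 : ∀ᶠ t in 𝓝 (0:ℝ), f (ℓ t) ≤ f (ℓ 0) := by
      have := hφmax
      exact this
    exact hφder.and h2
  obtain ⟨δ₁, hδ₁pos, hδ₁⟩ := Metric.eventually_nhds_iff.mp hev
  set δ := min δ₁ δ₂ with hδdef
  have hδpos : 0 < δ := lt_min hδ₁pos hδ₂pos
  have hmem : ∀ t ∈ Set.Icc (0:ℝ) (δ/2), dist t 0 < δ₁ := by
    intro t ht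
    rw [Real.dist_eq, sub_zero, _root_.abs_of_nonneg ht.1]
    calc t ≤ δ/2 := ht.2
    _ < δ := by linarith
    _ ≤ δ₁ := min_le_left _ _
  have hcont : ContinuousOn (fun s => f (ℓ s)) (Set.Icc 0 (δ/2)) := by
    intro t ht
    exact ((hδ₁ (hmem t ht)).1.differentiableAt.continuousAt).continuousWithinAt
  have hderivpos : ∀ t ∈ interior (Set.Icc (0:ℝ) (δ/2)), 0 < deriv (fun s => f (ℓ s)) t := by
    intro t ht
    rw [interior_Icc] at ht
    have h1 : dist t 0 < δ₁ := by
      rw [Real.dist_eq, sub_zero, _root_.abs_of_nonneg (le_of_lt ht.1)]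
      calc t < δ/2 := ht.2
      _ < δ := by linarith
      _ ≤ δ₁ := min_le_left _ _
    rw [(hδ₁ h1).1.deriv]
    exact hδ₂ t ⟨ht.1, by linarith [ht.2, min_le_right δ₁ δ₂]⟩
  have hmono := strictMonoOn_of_deriv_pos (convex_Icc (0:ℝ) (δ/2)) hcont hderivpos
  have h1 : f (ℓ 0) < f (ℓ (δ/2)) :=
    hmono (Set.left_mem_Icc.mpr (by linarith)) (Set.right_mem_Icc.mpr (by linarith)) (by linarith)
  have h2 : f (ℓ (δ/2)) ≤ f (ℓ 0) := by
    refine (hδ₁ ?_).2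
    rw [Real.dist_eq, sub_zero, _root_.abs_of_nonneg (by linarith)]
    calc δ/2 < δ := by linarith
    _ ≤ δ₁ := min_le_left _ _
  linarith

lemma fderiv2_dir_add {f g : ℂ → ℝ} {U : Set ℂ} (hU : IsOpen U)
    (hf : ContDiffOn ℝ 2 f U) (hg : ContDiffOn ℝ 2 g U) {x₀ : ℂ} (hx : x₀ ∈ U) (c : ℝ) (v : ℂ) :
    fderiv ℝ (fun y => fderiv ℝ (fun z => f z + c * g z) y v) x₀ v
      = fderiv ℝ (fun y => fderiv ℝ f y v) x₀ v + c * fderiv ℝ (fun y => fderiv ℝ g y v) x₀ v := by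
  have hev : (fun y => fderiv ℝ (fun z => f z + c * g z) y v)
      =ᶠ[𝓝 x₀] (fun y => fderiv ℝ f y v + c * fderiv ℝ g y v) := by
    filter_upwards [hU.mem_nhds hx] with y hy
    have hfd := diffAt_of_C2 hU hf hy
    have hgd := diffAt_of_C2 hU hg hy
    have h1 : fderiv ℝ (fun z => f z + c * g z) y = fderiv ℝ f y + c • fderiv ℝ g y := by
      rw [fderiv_fun_add hfd (hgd.const_mul c), fderiv_const_mul hgd]
    rw [h1]
    simp
  rw [hev.fderiv_eq, fderiv_fun_add (dirDiff hU hf v hx) ((dirDiff hU hg v hx).const_mul c),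
    fderiv_const_mul (dirDiff hU hg v hx)]
  simp

lemma HarmonicOnSet.mono {f : ℂ → ℝ} {U V : Set ℂ} (h : HarmonicOnSet f U) (hVU : V ⊆ U) :
    HarmonicOnSet f V :=
  ⟨h.1.mono hVU, fun z hz => h.2 z (hVU hz)⟩

lemma HarmonicOnSet.add_mul {f g : ℂ → ℝ} {U : Set ℂ} (hU : IsOpen U)
    (hf : HarmonicOnSet f U) (hg : HarmonicOnSet g U) (c : ℝ) :
    HarmonicOnSet (fun z => f z + c * g z) U := by
  constructor
  · exact hf.1.add (contDiffOn_const.mul hg.1)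
  · intro z hz
    rw [fderiv2_dir_add hU hf.1 hg.1 hz c 1, fderiv2_dir_add hU hf.1 hg.1 hz c Complex.I]
    have h1 := hf.2 z hz
    have h2 := hg.2 z hz
    linear_combination h1 + c * h2

lemma harmonic_const (c : ℝ) (s : Set ℂ) : HarmonicOnSet (fun _ => c) s := by
  constructor
  · exact contDiffOn_const
  · intro z hz
    simp [fderiv_const]

-- q := fun z => z.re * z.re has Laplacian 2
lemma q_fderiv (z : ℂ) : fderiv ℝ (fun z : ℂ => z.re * z.re) z
    = z.re • (Complex.reCLM : ℂ →L[ℝ] ℝ) + z.re • (Complex.reCLM : ℂ →L[ℝ] ℝ) := by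
  have h := (Complex.reCLM : ℂ →L[ℝ] ℝ).hasFDerivAt (x := z)
  exact (h.mul h).fderiv

lemma q_lap (x : ℂ) :
    fderiv ℝ (fun y => fderiv ℝ (fun z : ℂ => z.re * z.re) y 1) x 1 +
      fderiv ℝ (fun y => fderiv ℝ (fun z : ℂ => z.re * z.re) y Complex.I) x Complex.I = 2 := by
  have h1 : (fun y : ℂ => fderiv ℝ (fun z : ℂ => z.re * z.re) y 1) = fun y : ℂ => 2 * y.re := by
    funext y
    rw [q_fderiv]
    simp [two_mul]
  have h2 : (fun y : ℂ => fderiv ℝ (fun z : ℂ => z.re * z.re) y Complex.I) = fun _ : ℂ => (0:ℝ) := by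
    funext y
    rw [q_fderiv]
    simp
  rw [h1, h2]
  have h3 : HasFDerivAt (fun y : ℂ => 2 * y.re) ((2:ℝ) • (Complex.reCLM : ℂ →L[ℝ] ℝ)) x :=
    (Complex.reCLM : ℂ →L[ℝ] ℝ).hasFDerivAt.const_mul 2
  rw [h3.fderiv]
  simp

lemma q_contDiffOn (U : Set ℂ) : ContDiffOn ℝ 2 (fun z : ℂ => z.re * z.re) U := by
  have : ContDiff ℝ 2 (fun z : ℂ => z.re * z.re) :=
    ((Complex.reCLM : ℂ →L[ℝ] ℝ).contDiff.of_le le_top).mul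
      ((Complex.reCLM : ℂ →L[ℝ] ℝ).contDiff.of_le le_top)
  exact this.contDiffOn

/-- Weak maximum principle. -/
lemma weakMax {V : Set ℂ} (hV : IsOpen V) (hbdd : Bornology.IsBounded V) {f : ℂ → ℝ}
    (hc : ContinuousOn f (closure V)) (hh : HarmonicOnSet f V) {b : ℝ}
    (hb : ∀ x ∈ frontier V, f x ≤ b) : ∀ z ∈ closure V, f z ≤ b := by
  rcases V.eq_empty_or_nonempty with rfl | hne
  · simp
  intro z hz
  have hK : IsCompact (closure V) := hbdd.isCompact_closure
  have hqc : Continuous (fun z : ℂ => z.re * z.re) := by continuity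
  obtain ⟨xq, _, hxq⟩ := hK.exists_isMaxOn (hne.closure) hqc.continuousOn
  set Qm : ℝ := |xq.re * xq.re| + 1 with hQm
  have hQmbound : ∀ y ∈ closure V, y.re * y.re ≤ Qm := by
    intro y hy
    calc y.re * y.re ≤ xq.re * xq.re := hxq hy
    _ ≤ |xq.re * xq.re| := le_abs_self _
    _ ≤ Qm := by simp [hQm]
  have hQmpos : 0 < Qm := by positivity
  have key : ∀ ε > (0:ℝ), f z ≤ b + ε * Qm := by
    intro ε hε
    set F : ℂ → ℝ := fun y => f y + ε * (y.re * y.re) with hF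
    have hFc : ContinuousOn F (closure V) :=
      hc.add ((continuous_const.mul hqc).continuousOn)
    obtain ⟨x₀, hx₀K, hx₀max⟩ := hK.exists_isMaxOn (hne.closure) hFc
    by_cases hx₀ : x₀ ∈ V
    · exfalso
      have hmax : IsLocalMax F x₀ :=
        hx₀max.isLocalMax (mem_of_superset (hV.mem_nhds hx₀) subset_closure)
      have hF2 : ContDiffOn ℝ 2 F V := hh.1.add (contDiffOn_const.mul (q_contDiffOn V))
      have h1 := dir2_nonpos hV hF2 hx₀ hmax 1
      have hI := dir2_nonpos hV hF2 hx₀ hmax Complex.I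
      rw [fderiv2_dir_add hV hh.1 (q_contDiffOn V) hx₀ ε 1] at h1
      rw [fderiv2_dir_add hV hh.1 (q_contDiffOn V) hx₀ ε Complex.I] at hI
      have hq := q_lap x₀
      have hf0 := hh.2 x₀ hx₀
      nlinarith [h1, hI, hq, hf0, hε]
    · have hfr : x₀ ∈ frontier V := by
        rw [hV.frontier_eq]; exact ⟨hx₀K, hx₀⟩
      have hzq : 0 ≤ z.re * z.re := mul_self_nonneg _
      have h1 : F z ≤ F x₀ := hx₀max hz
      have h2 : f x₀ ≤ b := hb x₀ hfr
      have h3 : x₀.re * x₀.re ≤ Qm := hQmbound x₀ hx₀K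
      have : f z ≤ f x₀ + ε * (x₀.re * x₀.re) := by
        have := h1
        simp only [hF] at this
        nlinarith
      nlinarith
  by_contra hcon
  push_neg at hcon
  have hε := key ((f z - b) / (2 * Qm)) (div_pos (by linarith) (by linarith))
  have heq : (f z - b) / (2 * Qm) * Qm = (f z - b)/2 := by
    field_simp
  rw [heq] at hε
  linarith

lemma harmonic_log (w : ℂ) : HarmonicOnSet (fun z => Real.log ‖z - w‖) {w}ᶜ := by
  set u : ℂ → ℝ := fun z => (z.re - w.re) * (z.re - w.re) + (z.im - w.im) * (z.im - w.im) with hu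
  have hnormSq : ∀ z : ℂ, Complex.normSq (z - w) = u z := by
    intro z
    simp [Complex.normSq_apply, Complex.sub_re, Complex.sub_im, hu]
  have hfun : (fun z : ℂ => Real.log ‖z - w‖)
      = fun z => (0:ℝ) + (1/2) * Real.log (u z) := by
    funext z
    rw [Complex.norm_def, Real.log_sqrt (Complex.normSq_nonneg _), hnormSq]
    ring
  rw [hfun]
  refine HarmonicOnSet.add_mul isOpen_compl_singleton (harmonic_const 0 _) ?_ (1/2)
  have hupos : ∀ z : ℂ, z ≠ w → 0 < u z := by
    intro z hz
    rw [← hnormSq]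
    exact Complex.normSq_pos.mpr (sub_ne_zero.mpr hz)
  have hre : ∀ z : ℂ, HasFDerivAt (fun z : ℂ => z.re - w.re) (Complex.reCLM : ℂ →L[ℝ] ℝ) z :=
    fun z => (Complex.reCLM : ℂ →L[ℝ] ℝ).hasFDerivAt.sub_const _
  have him : ∀ z : ℂ, HasFDerivAt (fun z : ℂ => z.im - w.im) (Complex.imCLM : ℂ →L[ℝ] ℝ) z :=
    fun z => (Complex.imCLM : ℂ →L[ℝ] ℝ).hasFDerivAt.sub_const _
  set D : ℂ → (ℂ →L[ℝ] ℝ) := fun z =>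
    ((z.re - w.re) • (Complex.reCLM : ℂ →L[ℝ] ℝ) + (z.re - w.re) • (Complex.reCLM : ℂ →L[ℝ] ℝ)) +
      ((z.im - w.im) • (Complex.imCLM : ℂ →L[ℝ] ℝ) + (z.im - w.im) • (Complex.imCLM : ℂ →L[ℝ] ℝ))
    with hD
  have hud : ∀ z : ℂ, HasFDerivAt u (D z) z := by
    intro z
    exact ((hre z).mul (hre z)).add ((him z).mul (him z))
  have hucd : ContDiff ℝ 2 u := by
    have h1 : ContDiff ℝ 2 (fun z : ℂ => z.re - w.re) :=
      (Complex.reCLM : ℂ →L[ℝ] ℝ).contDiff.sub contDiff_const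
    have h2 : ContDiff ℝ 2 (fun z : ℂ => z.im - w.im) :=
      (Complex.imCLM : ℂ →L[ℝ] ℝ).contDiff.sub contDiff_const
    exact (h1.mul h1).add (h2.mul h2)
  constructor
  · intro z hz
    have hz' : z ≠ w := hz
    exact ((Real.contDiffAt_log.mpr (ne_of_gt (hupos z hz'))).comp z hucd.contDiffAt).contDiffWithinAt
  · intro z hz
    have hz' : z ≠ w := hz
    have hopen : {w}ᶜ ∈ 𝓝 z := isOpen_compl_singleton.mem_nhds hz
    have hLd : ∀ y : ℂ, y ≠ w → HasFDerivAt (fun z => Real.log (u z)) ((u y)⁻¹ • D y) y := by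
      intro y hy
      exact (Real.hasDerivAt_log (ne_of_gt (hupos y hy))).comp_hasFDerivAt y (hud y)
    have hune : u z ≠ 0 := ne_of_gt (hupos z hz')
    have hev1 : (fun y => fderiv ℝ (fun z => Real.log (u z)) y 1)
        =ᶠ[𝓝 z] (fun y => (2 * (y.re - w.re)) * (u y)⁻¹) := by
      filter_upwards [hopen] with y hy
      rw [(hLd y hy).fderiv]
      simp [hD]
      ring
    have hevI : (fun y => fderiv ℝ (fun z => Real.log (u z)) y Complex.I)
        =ᶠ[𝓝 z] (fun y => (2 * (y.im - w.im)) * (u y)⁻¹) := by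
      filter_upwards [hopen] with y hy
      rw [(hLd y hy).fderiv]
      simp [hD]
      ring
    have hinv : HasFDerivAt (fun y : ℂ => (u y)⁻¹) ((-(u z ^ 2)⁻¹) • D z) z :=
      (hasDerivAt_inv hune).comp_hasFDerivAt z (hud z)
    have hP : HasFDerivAt (fun y : ℂ => (2 * (y.re - w.re)) * (u y)⁻¹)
        ((2 * (z.re - w.re)) • ((-(u z ^ 2)⁻¹) • D z) + (u z)⁻¹ • ((2:ℝ) • (Complex.reCLM : ℂ →L[ℝ] ℝ))) z :=
      ((hre z).const_mul 2).mul hinv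
    have hQ : HasFDerivAt (fun y : ℂ => (2 * (y.im - w.im)) * (u y)⁻¹)
        ((2 * (z.im - w.im)) • ((-(u z ^ 2)⁻¹) • D z) + (u z)⁻¹ • ((2:ℝ) • (Complex.imCLM : ℂ →L[ℝ] ℝ))) z :=
      ((him z).const_mul 2).mul hinv
    rw [hev1.fderiv_eq, hevI.fderiv_eq, hP.fderiv, hQ.fderiv]
    simp [hD, Complex.I_re, Complex.I_im]
    field_simp
    ring

lemma green_nonneg {Ω : Set ℂ} {w : ℂ} {g : ℂ → ℝ} (hΩopen : IsOpen Ω)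
    (hΩbdd : Bornology.IsBounded Ω) (hw : w ∈ Ω) (hg : IsGreensFunction Ω w g) :
    ∀ z, z ≠ w → 0 ≤ g z := by
  obtain ⟨hgc, hg0, hgh, C, r, hr, hC⟩ := hg
  intro z hzw
  by_cases hzΩ : z ∈ Ω
  swap
  · rw [hg0 z hzΩ]
  have hdzw : 0 < dist z w := dist_pos.mpr hzw
  set δ := min (dist z w) (min r (Real.exp (-C))) / 2 with hδdef
  have hδpos : 0 < δ := half_pos (lt_min hdzw (lt_min hr (Real.exp_pos _)))
  have hδr : δ < r := by
    have h1 : min (dist z w) (min r (Real.exp (-C))) ≤ r :=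
      le_trans (min_le_right _ _) (min_le_left _ _)
    have := half_lt_self hr
    calc δ ≤ r / 2 := by rw [hδdef]; linarith
    _ < r := by linarith
  have hδexp : δ ≤ Real.exp (-C) := by
    have h1 : min (dist z w) (min r (Real.exp (-C))) ≤ Real.exp (-C) :=
      le_trans (min_le_right _ _) (min_le_right _ _)
    have h2 := Real.exp_pos (-C)
    rw [hδdef]; linarith
  have hδz : δ < dist z w := by
    have h1 : min (dist z w) (min r (Real.exp (-C))) ≤ dist z w := min_le_left _ _
    rw [hδdef]; linarith
  set V := Ω \ Metric.closedBall w δ with hV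
  have hVopen : IsOpen V := hΩopen.sdiff Metric.isClosed_closedBall
  have hVsub : V ⊆ Ω \ {w} := by
    rintro y ⟨hy1, hy2⟩
    refine ⟨hy1, ?_⟩
    intro hyw
    rw [Set.mem_singleton_iff] at hyw
    exact hy2 (by rw [hyw]; exact Metric.mem_closedBall_self (le_of_lt hδpos))
  have hVbdd : Bornology.IsBounded V := hΩbdd.subset Set.diff_subset
  have hclV : closure V ⊆ {w}ᶜ := by
    intro y hy
    have h1 : y ∈ closure ((Metric.closedBall w δ)ᶜ) :=
      closure_mono (fun p hp => hp.2) hy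
    rw [closure_compl, interior_closedBall w (ne_of_gt hδpos)] at h1
    intro hyw
    rw [Set.mem_singleton_iff] at hyw
    exact h1 (by rw [hyw]; exact Metric.mem_ball_self hδpos)
  have hFharm : HarmonicOnSet (fun y => (0:ℝ) + (-1) * g y) V :=
    HarmonicOnSet.add_mul hVopen (harmonic_const 0 V) (hgh.mono hVsub) (-1)
  have hFcont : ContinuousOn (fun y => (0:ℝ) + (-1) * g y) (closure V) :=
    continuousOn_const.add (continuousOn_const.mul (hgc.mono hclV))
  have hfront : ∀ x ∈ frontier V, (0:ℝ) + (-1) * g x ≤ 0 := by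
    intro x hx
    have hsplit : x ∈ frontier Ω ∪ frontier (Metric.closedBall w δ) := by
      have h1 : frontier V ⊆ frontier Ω ∪ frontier ((Metric.closedBall w δ)ᶜ) := by
        rw [hV, Set.diff_eq]
        intro p hp
        rcases frontier_inter_subset _ _ hp with h | h
        · exact Or.inl h.1
        · exact Or.inr h.2
      rcases h1 hx with h | h
      · exact Or.inl h
      · rw [frontier_compl] at h
        exact Or.inr h
    rcases hsplit with hxf | hxs
    · have hxΩ : x ∉ Ω := by
        rw [hΩopen.frontier_eq] at hxf
        exact hxf.2
      rw [hg0 x hxΩ]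
      norm_num
    · rw [frontier_closedBall w (ne_of_gt hδpos), Metric.mem_sphere] at hxs
      by_cases hxΩ : x ∈ Ω
      · have hxw : x ≠ w := by
          intro h
          rw [h, dist_self] at hxs
          exact (ne_of_gt hδpos) hxs.symm
        have hxb : x ∈ Metric.ball w r \ {w} :=
          ⟨Metric.mem_ball.mpr (by rw [hxs]; exact hδr), hxw⟩
        have hest := abs_le.mp (hC x hxb)
        have habs : ‖x - w‖ = δ := by
          rw [← Complex.dist_eq]; exact hxs
        have hlog : Real.log ‖x - w‖ ≤ -C := by
          rw [habs]
          calc Real.log δ ≤ Real.log (Real.exp (-C)) := Real.log_le_log hδpos hδexp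
          _ = -C := Real.log_exp _
        linarith [hest.1]
      · rw [hg0 x hxΩ]
        norm_num
  have hzV : z ∈ V := by
    refine ⟨hzΩ, ?_⟩
    intro hc'
    rw [Metric.mem_closedBall] at hc'
    linarith
  have := weakMax hVopen hVbdd hFcont hFharm hfront z (subset_closure hzV)
  linarith

/-- If `Ω, Ω'` are bounded domains containing `w` with Green's functions `g, g'` (pole `w`,
extended by zero) and `sup_{z ≠ w} (g' z - g z) > 0`, then this supremum is attained at a
point of `∂Ω`, and it equals `sup_{∂Ω} g'`. -/
theorem green_difference_max_on_boundary
    (w : ℂ) (Ω Ω' : Set ℂ) (g g' : ℂ → ℝ)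
    (hΩopen : IsOpen Ω) (hΩconn : IsConnected Ω) (hΩbdd : Bornology.IsBounded Ω)
    (hΩ'open : IsOpen Ω') (hΩ'conn : IsConnected Ω') (hΩ'bdd : Bornology.IsBounded Ω')
    (hw : w ∈ Ω) (hw' : w ∈ Ω')
    (hg : IsGreensFunction Ω w g) (hg' : IsGreensFunction Ω' w g')
    (hpos : 0 < sSup ((fun z => g' z - g z) '' {w}ᶜ)) :
    (∃ z ∈ frontier Ω, g' z - g z = sSup ((fun z => g' z - g z) '' {w}ᶜ)) ∧
    sSup ((fun z => g' z - g z) '' {w}ᶜ) = sSup (g' '' frontier Ω) := by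
  have hgnonneg : ∀ z, z ≠ w → 0 ≤ g z := green_nonneg hΩopen hΩbdd hw hg
  obtain ⟨hgc, hg0, hgh, C₁, r₁, hr₁, hC₁⟩ := hg
  obtain ⟨hg'c, hg'0, hg'h, C₂, r₂, hr₂, hC₂⟩ := hg'
  set M := sSup ((fun z => g' z - g z) '' {w}ᶜ) with hMdef
  -- basic frontier facts
  have hwfr : w ∉ frontier Ω := fun h => ((hΩopen.frontier_eq ▸ h).2) hw
  have hwfr' : w ∉ frontier Ω' := fun h => ((hΩ'open.frontier_eq ▸ h).2) hw'
  have hgfr : ∀ x ∈ frontier Ω, g x = 0 := fun x hx =>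
    hg0 x ((hΩopen.frontier_eq ▸ hx).2)
  have hg'fr' : ∀ x ∈ frontier Ω', g' x = 0 := fun x hx =>
    hg'0 x ((hΩ'open.frontier_eq ▸ hx).2)
  -- frontier Ω is compact and nonempty
  have hfrcomp : IsCompact (frontier Ω) :=
    (hΩbdd.isCompact_closure).of_isClosed_subset isClosed_frontier frontier_subset_closure
  have hfrne : (frontier Ω).Nonempty := by
    by_contra h
    rw [Set.not_nonempty_iff_eq_empty] at h
    have hclopen : IsClopen Ω := isClopen_iff_frontier_eq_empty.mpr h
    rcases isClopen_iff.mp hclopen with h1 | h1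
    · rw [h1] at hw; exact hw
    · obtain ⟨R, hR⟩ := hΩbdd.subset_closedBall w
      have hmem : w + (R + 1 : ℝ) ∈ Ω := by rw [h1]; trivial
      have := hR hmem
      rw [Metric.mem_closedBall, Complex.dist_eq, add_sub_cancel_left, Complex.norm_real, Real.norm_eq_abs] at this
      have h2 := le_abs_self (R + 1)
      linarith
  -- maximum of g' on frontier Ω
  have hg'cont_fr : ContinuousOn g' (frontier Ω) := by
    refine hg'c.mono ?_
    intro x hx hxw
    rw [Set.mem_singleton_iff] at hxw
    exact hwfr (hxw ▸ hx)
  obtain ⟨z₀, hz₀fr, hz₀max⟩ := hfrcomp.exists_isMaxOn hfrne hg'cont_fr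
  set B := g' z₀ with hBdef
  set b := max B 0 with hbdef
  have hBb : B ≤ b := le_max_left _ _
  have hb0 : (0:ℝ) ≤ b := le_max_right _ _
  -- L and Λ
  set L : ℂ → ℝ := fun z => Real.log ‖z - w‖ with hLdef
  have hLharm := harmonic_log w
  have hLcont : ContinuousOn L {w}ᶜ := hLharm.1.continuousOn
  obtain ⟨R₀, hR₀⟩ := (hΩbdd.union hΩ'bdd).subset_closedBall w
  set R := max R₀ 1 with hRdef
  have hR1 : (1:ℝ) ≤ R := le_max_right _ _
  set Λ := Real.log R with hΛdef
  have hΛ0 : 0 ≤ Λ := Real.log_nonneg hR1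
  have hclsub : closure (Ω ∪ Ω') ⊆ Metric.closedBall w R := by
    apply closure_minimal _ Metric.isClosed_closedBall
    exact hR₀.trans (Metric.closedBall_subset_closedBall (le_max_left _ _))
  have hLbound : ∀ x, x ∈ closure (Ω ∪ Ω') → x ≠ w → L x ≤ Λ := by
    intro x hx hxw
    have h1 : dist x w ≤ R := Metric.mem_closedBall.mp (hclsub hx)
    have h2 : (0:ℝ) < ‖x - w‖ :=
      norm_pos_iff.mpr (sub_ne_zero.mpr hxw)
    calc L x = Real.log ‖x - w‖ := rfl
    _ ≤ Real.log R := Real.log_le_log h2 (by rw [← Complex.dist_eq]; exact h1)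
    _ = Λ := rfl
  -- near-w bound for the difference
  set ρ := min r₁ r₂ with hρdef
  have hρpos : 0 < ρ := lt_min hr₁ hr₂
  have hnear : ∀ y, dist y w < ρ → y ≠ w → g' y - g y ≤ C₂ + C₁ := by
    intro y h1 h2
    have hy1 : y ∈ Metric.ball w r₁ \ {w} :=
      ⟨Metric.mem_ball.mpr (lt_of_lt_of_le h1 (min_le_left _ _)), h2⟩
    have hy2 : y ∈ Metric.ball w r₂ \ {w} :=
      ⟨Metric.mem_ball.mpr (lt_of_lt_of_le h1 (min_le_right _ _)), h2⟩
    have e1 := abs_le.mp (hC₁ y hy1)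
    have e2 := abs_le.mp (hC₂ y hy2)
    linarith [e1.1, e2.2]
  -- the central claim : g' - g ≤ b off w
  have claim : ∀ z, z ≠ w → g' z - g z ≤ b := by
    intro z hzw
    by_cases hzΩ : z ∈ Ω
    · by_cases hzΩ' : z ∈ Ω'
      · -- ε-log argument on (Ω ∩ Ω') \ closedBall w δ
        have hdzw : 0 < dist z w := dist_pos.mpr hzw
        have hLzΛ : L z ≤ Λ := hLbound z (subset_closure (Or.inl hzΩ)) hzw
        have key : ∀ ep > (0:ℝ), g' z - g z ≤ b + ep := by
          intro ep hep
          set d := Λ - L z + 1 with hddef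
          have hdpos : 0 < d := by rw [hddef]; linarith
          set ε := ep / d with hεdef
          have hεpos : 0 < ε := div_pos hep hdpos
          set δ := min (Real.exp ((b - (C₂ + C₁)) / ε)) (min (ρ/2) (dist z w / 2)) with hδdef
          have hδpos : 0 < δ :=
            lt_min (Real.exp_pos _) (lt_min (by linarith) (by linarith))
          set V := (Ω ∩ Ω') \ Metric.closedBall w δ with hVdef
          have hVopen : IsOpen V := (hΩopen.inter hΩ'open).sdiff Metric.isClosed_closedBall
          have hVbdd : Bornology.IsBounded V := hΩbdd.subset (fun y hy => hy.1.1)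
          have hVw : ∀ y ∈ V, y ≠ w := by
            rintro y ⟨_, hy2⟩ hyw
            exact hy2 (by rw [hyw]; exact Metric.mem_closedBall_self (le_of_lt hδpos))
          have hVsubΩ : V ⊆ Ω \ {w} := fun y hy => ⟨hy.1.1, hVw y hy⟩
          have hVsubΩ' : V ⊆ Ω' \ {w} := fun y hy => ⟨hy.1.2, hVw y hy⟩
          have hVsubw : V ⊆ {w}ᶜ := fun y hy => hVw y hy
          have hclVw : closure V ⊆ {w}ᶜ := by
            intro y hy
            have h1 : y ∈ closure ((Metric.closedBall w δ)ᶜ) :=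
              closure_mono (fun p hp => hp.2) hy
            rw [closure_compl, interior_closedBall w (ne_of_gt hδpos)] at h1
            intro hyw
            rw [Set.mem_singleton_iff] at hyw
            exact h1 (by rw [hyw]; exact Metric.mem_ball_self hδpos)
          set F : ℂ → ℝ := fun y => (g' y + (-1) * g y) + ε * L y with hFdef
          have hFharm : HarmonicOnSet F V :=
            HarmonicOnSet.add_mul hVopen
              (HarmonicOnSet.add_mul hVopen (hg'h.mono hVsubΩ') (hgh.mono hVsubΩ) (-1))
              (hLharm.mono hVsubw) ε
          have hFcont : ContinuousOn F (closure V) :=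
            ((hg'c.mono hclVw).add (continuousOn_const.mul (hgc.mono hclVw))).add
              (continuousOn_const.mul (hLcont.mono hclVw))
          have hfront : ∀ x ∈ frontier V, F x ≤ b + ε * Λ := by
            intro x hx
            have hsplit : x ∈ frontier (Ω ∩ Ω') ∪ frontier (Metric.closedBall w δ) := by
              have h1 : frontier V ⊆ frontier (Ω ∩ Ω') ∪ frontier ((Metric.closedBall w δ)ᶜ) := by
                rw [hVdef, Set.diff_eq]
                intro p hp
                rcases frontier_inter_subset _ _ hp with h | h
                · exact Or.inl h.1
                · exact Or.inr h.2
              rcases h1 hx with h | h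
              · exact Or.inl h
              · rw [frontier_compl] at h
                exact Or.inr h
            rcases hsplit with hxf | hxs
            · have hxf2 : x ∈ frontier Ω ∪ frontier Ω' := by
                rcases frontier_inter_subset Ω Ω' hxf with h | h
                · exact Or.inl h.1
                · exact Or.inr h.2
              have hxw : x ≠ w := by
                intro he
                rcases hxf2 with h | h
                · exact hwfr (he ▸ h)
                · exact hwfr' (he ▸ h)
              have hxcl : x ∈ closure (Ω ∪ Ω') := by
                rcases hxf2 with h | h
                · exact closure_mono Set.subset_union_left (frontier_subset_closure h)
                · exact closure_mono Set.subset_union_right (frontier_subset_closure h)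
              have hxΛ : L x ≤ Λ := hLbound x hxcl hxw
              have hεΛ : ε * L x ≤ ε * Λ := mul_le_mul_of_nonneg_left hxΛ (le_of_lt hεpos)
              rcases hxf2 with h | h
              · have h0 : g x = 0 := hgfr x h
                have h1 : g' x ≤ B := hz₀max h
                rw [hFdef]
                simp only []
                rw [h0]
                linarith [hBb, hεΛ]
              · have h0 : g' x = 0 := hg'fr' x h
                have h1 : 0 ≤ g x := hgnonneg x hxw
                rw [hFdef]
                simp only []
                rw [h0]
                linarith [hb0, hεΛ]
            · rw [frontier_closedBall w (ne_of_gt hδpos), Metric.mem_sphere] at hxs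
              have hxw : x ≠ w := by
                intro he
                rw [he, dist_self] at hxs
                exact (ne_of_gt hδpos) hxs.symm
              have hxρ : dist x w < ρ := by
                rw [hxs]
                calc δ ≤ ρ/2 := le_trans (min_le_right _ _) (min_le_left _ _)
                _ < ρ := by linarith
              have hup := hnear x hxρ hxw
              have hLx : L x = Real.log δ := by
                rw [hLdef]
                simp only []
                rw [show ‖x - w‖ = δ from by rw [← Complex.dist_eq]; exact hxs]
              have hlogδ : Real.log δ ≤ (b - (C₂ + C₁)) / ε := by
                calc Real.log δ ≤ Real.log (Real.exp ((b - (C₂ + C₁)) / ε)) :=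
                  Real.log_le_log hδpos (min_le_left _ _)
                _ = (b - (C₂ + C₁)) / ε := Real.log_exp _
              have hεlog : ε * Real.log δ ≤ b - (C₂ + C₁) := by
                have h := mul_le_mul_of_nonneg_left hlogδ (le_of_lt hεpos)
                rwa [mul_div_cancel₀ _ (ne_of_gt hεpos)] at h
              have hεΛ' : 0 ≤ ε * Λ := mul_nonneg (le_of_lt hεpos) hΛ0
              rw [hFdef]
              simp only []
              rw [hLx]
              linarith [hup, hεlog, hεΛ']
          have hzV : z ∈ V := by
            refine ⟨⟨hzΩ, hzΩ'⟩, ?_⟩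
            intro hc'
            rw [Metric.mem_closedBall] at hc'
            have : δ ≤ dist z w / 2 := le_trans (min_le_right _ _) (min_le_right _ _)
            linarith
          have hkey := weakMax hVopen hVbdd hFcont hFharm hfront z (subset_closure hzV)
          have heq : ε * Λ - ε * L z + ε = ep := by
            have h1 : ε * d = ep := div_mul_cancel₀ _ (ne_of_gt hdpos)
            calc ε * Λ - ε * L z + ε = ε * (Λ - L z + 1) := by ring
            _ = ε * d := by rw [hddef]
            _ = ep := h1
          rw [hFdef] at hkey
          simp only [] at hkey
          linarith [hkey, heq]
        by_contra hlt
        push_neg at hlt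
        have := key ((g' z - g z - b) / 2) (by linarith)
        linarith
      · rw [hg'0 z hzΩ']
        have := hgnonneg z hzw
        linarith
    · by_cases hzΩ' : z ∈ Ω'
      · by_cases hzcl : z ∈ closure Ω
        · have hzfr : z ∈ frontier Ω := by
            rw [hΩopen.frontier_eq]; exact ⟨hzcl, hzΩ⟩
          rw [hg0 z hzΩ]
          have h2 : g' z ≤ B := hz₀max hzfr
          linarith
        · set V := Ω' \ closure Ω with hVdef
          have hVopen : IsOpen V := hΩ'open.sdiff isClosed_closure
          have hVbdd : Bornology.IsBounded V := hΩ'bdd.subset (fun y hy => hy.1)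
          have hVsub : V ⊆ Ω' \ {w} := by
            rintro y ⟨hy1, hy2⟩
            refine ⟨hy1, ?_⟩
            intro hyw
            rw [Set.mem_singleton_iff] at hyw
            exact hy2 (hyw ▸ subset_closure hw)
          have hclVw : closure V ⊆ {w}ᶜ := by
            intro y hy
            have h1 : y ∈ closure ((closure Ω)ᶜ) := closure_mono (fun p hp => hp.2) hy
            rw [closure_compl] at h1
            intro hyw
            rw [Set.mem_singleton_iff] at hyw
            exact h1 (by
              rw [hyw]
              exact interior_maximal subset_closure hΩopen hw)
          have hfront : ∀ x ∈ frontier V, g' x ≤ b := by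
            intro x hx
            have hsplit : x ∈ frontier Ω' ∪ frontier Ω := by
              have h1 : frontier V ⊆ frontier Ω' ∪ frontier ((closure Ω)ᶜ) := by
                rw [hVdef, Set.diff_eq]
                intro p hp
                rcases frontier_inter_subset _ _ hp with h | h
                · exact Or.inl h.1
                · exact Or.inr h.2
              rcases h1 hx with h | h
              · exact Or.inl h
              · rw [frontier_compl] at h
                exact Or.inr (frontier_closure_subset h)
            rcases hsplit with h | h
            · rw [hg'fr' x h]; exact hb0
            · exact le_trans (hz₀max h) hBb
          have hcont : ContinuousOn g' (closure V) := hg'c.mono hclVw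
          have hharm : HarmonicOnSet g' V := hg'h.mono hVsub
          have := weakMax hVopen hVbdd hcont hharm hfront z
            (subset_closure ⟨hzΩ', hzcl⟩)
          rw [hg0 z hzΩ]
          linarith
      · rw [hg0 z hzΩ, hg'0 z hzΩ']
        simpa using hb0
  -- conclude
  have himgBdd : BddAbove ((fun z => g' z - g z) '' {w}ᶜ) := by
    refine ⟨b, ?_⟩
    rintro x ⟨y, hy, rfl⟩
    exact claim y hy
  have hz₀w : z₀ ≠ w := fun h => hwfr (h ▸ hz₀fr)
  have hBM : B ≤ M := by
    have hmem : g' z₀ - g z₀ ∈ (fun z => g' z - g z) '' {w}ᶜ := ⟨z₀, hz₀w, rfl⟩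
    have h1 := le_csSup himgBdd hmem
    rw [hgfr z₀ hz₀fr] at h1
    simpa using h1
  have hMb : M ≤ b := by
    apply Real.sSup_le _ hb0
    rintro x ⟨y, hy, rfl⟩
    exact claim y hy
  have hB0 : 0 < B := by
    by_contra hcontra
    push_neg at hcontra
    have hb' : b = 0 := max_eq_right hcontra
    rw [hb'] at hMb
    linarith
  have hbB : b = B := max_eq_left (le_of_lt hB0)
  have hMB : M = B := le_antisymm (hbB ▸ hMb) hBM
  constructor
  · refine ⟨z₀, hz₀fr, ?_⟩
    rw [hgfr z₀ hz₀fr, sub_zero]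
    exact hMB.symm
  · have hgr : IsGreatest (g' '' frontier Ω) B :=
      ⟨⟨z₀, hz₀fr, rfl⟩, by rintro x ⟨y, hy, rfl⟩; exact hz₀max hy⟩
    rw [hMB]
    exact (hgr.csSup_eq).symm
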